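/- Let p2, p3, p4, p5, p6 be points of ℝ² in convex position with no three collinear, and suppose that for some index i (taken cyclically in the cyclic sequence (2,3,4,5,6)) the points p_i and p_{i+1} are adjacent vertices of the convex pentagon with vertex set {p2, …, p6}. Then the interiors of the five consecutive triangles conv{p2,p3,p4}, conv{p3,p4,p5}, conv{p4,p5,p6}, conv{p5,p6,p2}, conv{p6,p2,p3} have empty common intersection. -/

import Mathlib

noncomputable section

/-- The plane ℝ². -/
abbrev Plane := EuclideanSpace ℝ (Fin 2)

/-- The determinant of two vectors of the plane. -/
def det2 (u v : Plane) : ℝ := u 0 * v 1 - u 1 * v 0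

/-- No three of the points `f 0, …, f (n-1)` are collinear. -/
def NoThreeCollinear {n : ℕ} (f : Fin n → Plane) : Prop :=
  ∀ i j k : Fin n, i ≠ j → i ≠ k → j ≠ k → ¬ Collinear ℝ ({f i, f j, f k} : Set Plane)

/-- The points `f 0, …, f (n-1)` are in convex position: no point of the family lies
in the convex hull of the remaining ones. -/
def ConvexPosition {n : ℕ} (f : Fin n → Plane) : Prop :=
  ∀ i : Fin n, f i ∉ convexHull ℝ (f '' {j | j ≠ i})

/-- `f i` and `f j` are adjacent vertices of the convex hull of the family `f`: all the
remaining points of the family lie strictly on one side of the line through them. -/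
def AdjacentVertices {n : ℕ} (f : Fin n → Plane) (i j : Fin n) : Prop :=
  (∀ k, k ≠ i → k ≠ j → 0 < det2 (f j - f i) (f k - f i)) ∨
  (∀ k, k ≠ i → k ≠ j → det2 (f j - f i) (f k - f i) < 0)

/-- Signed (twice) area of the triangle `p q r`. -/
def Dd (p q r : Plane) : ℝ := det2 (q - p) (r - p)

lemma Dd_eq (p q r : Plane) :
    Dd p q r = (q 0 - p 0) * (r 1 - p 1) - (q 1 - p 1) * (r 0 - p 0) := by
  simp [Dd, det2]

lemma Dd_rot (p q r : Plane) : Dd q r p = Dd p q r := by simp only [Dd_eq]; ring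

lemma Dd_swap (p q r : Plane) : Dd q p r = -Dd p q r := by simp only [Dd_eq]; ring

lemma Dd_swap23 (p q r : Plane) : Dd p r q = -Dd p q r := by simp only [Dd_eq]; ring

lemma tri_rot (a b c : Plane) : ({a, b, c} : Set Plane) = {b, c, a} := by
  ext y
  simp only [Set.mem_insert_iff, Set.mem_singleton_iff]
  tauto

lemma collinear_of_Dd (a b c : Plane) (h0 : Dd a b c = 0) :
    Collinear ℝ ({a, b, c} : Set Plane) := by
  rw [Dd_eq] at h0
  rw [collinear_iff_of_mem (Set.mem_insert a {b, c})]
  rcases eq_or_ne b a with hba | hba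
  · refine ⟨c - a, ?_⟩
    have hA : ∃ r : ℝ, a = r • (c - a) +ᵥ a := ⟨0, by simp⟩
    have hB : ∃ r : ℝ, b = r • (c - a) +ᵥ a := ⟨0, by simp [hba]⟩
    have hC : ∃ r : ℝ, c = r • (c - a) +ᵥ a := ⟨1, by simp⟩
    intro p hp
    rcases hp with rfl | rfl | rfl
    · exact hA
    · exact hB
    · exact hC
  · have hne : b 0 - a 0 ≠ 0 ∨ b 1 - a 1 ≠ 0 := by
      by_contra hCo
      push_neg at hCo
      apply hba
      apply PiLp.ext
      intro i
      fin_cases i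
      · simpa [sub_eq_zero] using hCo.1
      · simpa [sub_eq_zero] using hCo.2
    refine ⟨b - a, ?_⟩
    have hA : ∃ r : ℝ, a = r • (b - a) +ᵥ a := ⟨0, by simp⟩
    have hB : ∃ r : ℝ, b = r • (b - a) +ᵥ a := ⟨1, by simp⟩
    have hC : ∃ r : ℝ, c = r • (b - a) +ᵥ a := by
      rcases hne with hne | hne
      · refine ⟨(c 0 - a 0) / (b 0 - a 0), ?_⟩
        apply PiLp.ext
        intro i
        fin_cases i
        · show c 0 = ((c 0 - a 0) / (b 0 - a 0)) • (b - a) 0 + a 0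
          simp only [PiLp.sub_apply, smul_eq_mul]
          field_simp
          ring
        · show c 1 = ((c 0 - a 0) / (b 0 - a 0)) • (b - a) 1 + a 1
          simp only [PiLp.sub_apply, smul_eq_mul]
          field_simp
          linear_combination h0
      · refine ⟨(c 1 - a 1) / (b 1 - a 1), ?_⟩
        apply PiLp.ext
        intro i
        fin_cases i
        · show c 0 = ((c 1 - a 1) / (b 1 - a 1)) • (b - a) 0 + a 0
          simp only [PiLp.sub_apply, smul_eq_mul]
          field_simp
          linear_combination -h0
        · show c 1 = ((c 1 - a 1) / (b 1 - a 1)) • (b - a) 1 + a 1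
          simp only [PiLp.sub_apply, smul_eq_mul]
          field_simp
          ring
    intro p hp
    rcases hp with rfl | rfl | rfl
    · exact hA
    · exact hB
    · exact hC

/-- If `x` is interior to the triangle `abc` then it is strictly on the `c`-side of
line `ab`. -/
lemma Dd_mul_pos_of_mem_interior (a b c x : Plane)
    (h : ¬ Collinear ℝ ({a, b, c} : Set Plane))
    (hx : x ∈ interior (convexHull ℝ ({a, b, c} : Set Plane))) :
    0 < Dd a b c * Dd a b x := by
  have hS : Dd a b c ≠ 0 := fun h0 => h (collinear_of_Dd a b c h0)
  set H : Set Plane := {y | 0 ≤ Dd a b c * Dd a b y} with hH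
  have hHconv : Convex ℝ H := by
    intro y hy z hz s t hs ht hst
    simp only [hH, Set.mem_setOf_eq] at hy hz ⊢
    have hkey : Dd a b (s • y + t • z) = s * Dd a b y + t * Dd a b z := by
      have ht' : t = 1 - s := by linarith
      subst ht'
      simp only [Dd_eq, PiLp.add_apply, PiLp.smul_apply, smul_eq_mul]
      ring
    rw [hkey]
    nlinarith [mul_nonneg hs hy, mul_nonneg ht hz]
  have hsub : convexHull ℝ ({a, b, c} : Set Plane) ⊆ H := by
    apply convexHull_min _ hHconv
    have hA : a ∈ H := by
      have : Dd a b a = 0 := by rw [Dd_eq]; ring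
      simp only [hH, Set.mem_setOf_eq, this, mul_zero, le_refl]
    have hB : b ∈ H := by
      have : Dd a b b = 0 := by rw [Dd_eq]; ring
      simp only [hH, Set.mem_setOf_eq, this, mul_zero, le_refl]
    have hC : c ∈ H := by
      simp only [hH, Set.mem_setOf_eq]
      exact mul_self_nonneg _
    intro p hp
    rcases hp with rfl | rfl | rfl
    · exact hA
    · exact hB
    · exact hC
  have hxH : 0 ≤ Dd a b c * Dd a b x := hsub (interior_subset hx)
  rcases lt_or_eq_of_le hxH with hlt | heq
  · exact hlt
  exfalso
  have hx0 : Dd a b x = 0 := by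
    rcases mul_eq_zero.1 heq.symm with h1 | h1
    · exact absurd h1 hS
    · exact h1
  rw [mem_interior_iff_mem_nhds, Metric.mem_nhds_iff] at hx
  obtain ⟨ε, hε, hball⟩ := hx
  set t : ℝ := ε / (2 * (‖c - a‖ + 1)) with htdef
  have hnorm : (0:ℝ) ≤ ‖c - a‖ := norm_nonneg _
  have htpos : 0 < t := by positivity
  set x' : Plane := x - t • (c - a) with hx'
  have hx'mem : x' ∈ Metric.ball x ε := by
    rw [Metric.mem_ball, dist_eq_norm]
    have hxx : x' - x = -(t • (c - a)) := by rw [hx']; abel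
    rw [hxx, norm_neg, norm_smul, Real.norm_eq_abs, abs_of_pos htpos]
    have h1 : t * ‖c - a‖ < t * (‖c - a‖ + 1) := by nlinarith
    have h2 : t * (‖c - a‖ + 1) = ε / 2 := by
      rw [htdef]; field_simp
    linarith
  have hx'H : 0 ≤ Dd a b c * Dd a b x' := hsub (hball hx'mem)
  have hcalc : Dd a b x' = Dd a b x - t * Dd a b c := by
    simp only [hx', Dd_eq, PiLp.sub_apply, PiLp.smul_apply, smul_eq_mul]
    ring
  rw [hcalc, hx0, zero_sub] at hx'H
  have hsq : 0 < Dd a b c * Dd a b c := by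
    rcases hS.lt_or_gt with h' | h'
    · exact mul_pos_of_neg_of_neg h' h'
    · exact mul_pos h' h'
  nlinarith

/-- All three strict side conditions for an interior point of a triangle. -/
lemma interior_tri (a b c x : Plane)
    (h : ¬ Collinear ℝ ({a, b, c} : Set Plane))
    (hx : x ∈ interior (convexHull ℝ ({a, b, c} : Set Plane))) :
    0 < Dd a b c * Dd a b x ∧ 0 < Dd a b c * Dd b c x ∧ 0 < Dd a b c * Dd c a x := by
  have h2 : ¬ Collinear ℝ ({b, c, a} : Set Plane) := by rw [← tri_rot]; exact h
  have h3 : ¬ Collinear ℝ ({c, a, b} : Set Plane) := by rw [tri_rot]; exact h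
  have hx2 : x ∈ interior (convexHull ℝ ({b, c, a} : Set Plane)) := by
    rw [← tri_rot]; exact hx
  have hx3 : x ∈ interior (convexHull ℝ ({c, a, b} : Set Plane)) := by
    rw [← tri_rot]; exact hx2
  refine ⟨Dd_mul_pos_of_mem_interior a b c x h hx, ?_, ?_⟩
  · have := Dd_mul_pos_of_mem_interior b c a x h2 hx2
    rwa [Dd_rot a b c] at this
  · have := Dd_mul_pos_of_mem_interior c a b x h3 hx3
    rwa [Dd_rot b c a, Dd_rot a b c] at this

/-- A point with positive barycentric signs lies in the triangle. -/
lemma mem_triangle_of_Dd (a b c d : Plane)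
    (hS : 0 < Dd a b c) (h1 : 0 < Dd d b c) (h2 : 0 < Dd a d c) (h3 : 0 < Dd a b d) :
    d ∈ convexHull ℝ ({a, b, c} : Set Plane) := by
  set S := Dd a b c with hSdef
  set α := Dd d b c / S with hα
  set β := Dd a d c / S with hβ
  set γ := Dd a b d / S with hγ
  have hkey : Dd d b c + Dd a d c + Dd a b d = S := by
    simp only [hSdef, Dd_eq]; ring
  have hsum : α + β + γ = 1 := by
    rw [hα, hβ, hγ]
    field_simp
    linarith [hkey]
  have hsmul : S • d = Dd d b c • a + Dd a d c • b + Dd a b d • c := by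
    apply PiLp.ext
    intro i
    fin_cases i
    · show (S • d) 0 = (Dd d b c • a + Dd a d c • b + Dd a b d • c) 0
      simp only [PiLp.add_apply, PiLp.smul_apply, smul_eq_mul, hSdef, Dd_eq]
      ring
    · show (S • d) 1 = (Dd d b c • a + Dd a d c • b + Dd a b d • c) 1
      simp only [PiLp.add_apply, PiLp.smul_apply, smul_eq_mul, hSdef, Dd_eq]
      ring
  have hd : d = α • a + β • b + γ • c := by
    have h := congrArg (fun v : Plane => (S⁻¹ : ℝ) • v) hsmul
    simp only [smul_smul, inv_mul_cancel₀ (ne_of_gt hS), one_smul, smul_add] at h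
    rw [hα, hβ, hγ, div_eq_inv_mul, div_eq_inv_mul, div_eq_inv_mul]
    exact h
  have hαp : 0 < α := hα ▸ div_pos h1 hS
  have hβp : 0 < β := hβ ▸ div_pos h2 hS
  have hγp : 0 < γ := hγ ▸ div_pos h3 hS
  have hC : Convex ℝ (convexHull ℝ ({a, b, c} : Set Plane)) := convex_convexHull ℝ _
  have ha : a ∈ convexHull ℝ ({a, b, c} : Set Plane) :=
    subset_convexHull ℝ _ (by simp)
  have hb : b ∈ convexHull ℝ ({a, b, c} : Set Plane) :=
    subset_convexHull ℝ _ (by simp)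
  have hc : c ∈ convexHull ℝ ({a, b, c} : Set Plane) :=
    subset_convexHull ℝ _ (by simp)
  have htpos : 0 < β + γ := by linarith
  have hy : (β / (β + γ)) • b + (γ / (β + γ)) • c ∈
      convexHull ℝ ({a, b, c} : Set Plane) := by
    apply hC hb hc (by positivity) (by positivity)
    field_simp
  have hfin := hC ha hy (le_of_lt hαp) (le_of_lt htpos) (by linarith)
  have hcomb : α • a + (β + γ) • ((β / (β + γ)) • b + (γ / (β + γ)) • c)
      = α • a + β • b + γ • c := by
    rw [smul_add, smul_smul, smul_smul,
      mul_div_cancel₀ _ (ne_of_gt htpos), mul_div_cancel₀ _ (ne_of_gt htpos), add_assoc]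
  rw [hcomb, ← hd] at hfin
  exact hfin

/-- Core contradiction, positively oriented case. -/
lemma core (a b c d e x : Plane)
    (hc1 : ¬ Collinear ℝ ({a, b, c} : Set Plane))
    (hc2 : ¬ Collinear ℝ ({b, c, d} : Set Plane))
    (hc4 : ¬ Collinear ℝ ({d, e, a} : Set Plane))
    (hc5 : ¬ Collinear ℝ ({e, a, b} : Set Plane))
    (hd : d ∉ convexHull ℝ ({a, b, c} : Set Plane))
    (habc : 0 < Dd a b c) (habd : 0 < Dd a b d) (habe : 0 < Dd a b e)
    (h1 : x ∈ interior (convexHull ℝ ({a, b, c} : Set Plane)))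
    (h2 : x ∈ interior (convexHull ℝ ({b, c, d} : Set Plane)))
    (h4 : x ∈ interior (convexHull ℝ ({d, e, a} : Set Plane)))
    (h5 : x ∈ interior (convexHull ℝ ({e, a, b} : Set Plane))) : False := by
  obtain ⟨e11, e12, e13⟩ := interior_tri a b c x hc1 h1
  obtain ⟨e21, e22, e23⟩ := interior_tri b c d x hc2 h2
  obtain ⟨e41, e42, e43⟩ := interior_tri d e a x hc4 h4
  obtain ⟨e51, e52, e53⟩ := interior_tri e a b x hc5 h5
  have habx : 0 < Dd a b x := by nlinarith
  have hbcx : 0 < Dd b c x := by nlinarith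
  have hcax : 0 < Dd c a x := by nlinarith
  have hbcd : 0 < Dd b c d := by nlinarith
  have heab : 0 < Dd e a b := by rw [← Dd_rot e a b]; exact habe
  have heax : 0 < Dd e a x := by nlinarith
  have hdea : 0 < Dd d e a := by nlinarith
  have hadx : 0 < Dd a d x := by nlinarith
  have hacx : Dd a c x < 0 := by
    rw [Dd_swap c a x]; linarith
  have plk : Dd a b c * Dd a d x - Dd a b d * Dd a c x + Dd a b x * Dd a c d = 0 := by
    simp only [Dd_eq]; ring
  have hprod : Dd a b x * Dd a c d < 0 := by
    nlinarith [mul_pos habc hadx, mul_neg_of_pos_of_neg habd hacx]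
  have hacd : Dd a c d < 0 := by nlinarith
  apply hd
  apply mem_triangle_of_Dd a b c d habc
  · rw [← Dd_rot d b c]; exact hbcd
  · rw [Dd_swap23 a c d]; linarith
  · exact habd

/-- Core contradiction, both orientations. -/
lemma core2 (a b c d e x : Plane)
    (hc1 : ¬ Collinear ℝ ({a, b, c} : Set Plane))
    (hc2 : ¬ Collinear ℝ ({b, c, d} : Set Plane))
    (hc4 : ¬ Collinear ℝ ({d, e, a} : Set Plane))
    (hc5 : ¬ Collinear ℝ ({e, a, b} : Set Plane))
    (hd1 : d ∉ convexHull ℝ ({a, b, c} : Set Plane))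
    (hd2 : d ∉ convexHull ℝ ({e, a, b} : Set Plane))
    (hadj : (0 < Dd a b c ∧ 0 < Dd a b d ∧ 0 < Dd a b e) ∨
            (Dd a b c < 0 ∧ Dd a b d < 0 ∧ Dd a b e < 0))
    (h1 : x ∈ interior (convexHull ℝ ({a, b, c} : Set Plane)))
    (h2 : x ∈ interior (convexHull ℝ ({b, c, d} : Set Plane)))
    (h4 : x ∈ interior (convexHull ℝ ({d, e, a} : Set Plane)))
    (h5 : x ∈ interior (convexHull ℝ ({e, a, b} : Set Plane))) : False := by
  have s1 : ({b, a, e} : Set Plane) = {e, a, b} := by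
    ext y; simp only [Set.mem_insert_iff, Set.mem_singleton_iff]; tauto
  have s2 : ({a, e, d} : Set Plane) = {d, e, a} := by
    ext y; simp only [Set.mem_insert_iff, Set.mem_singleton_iff]; tauto
  have s3 : ({d, c, b} : Set Plane) = {b, c, d} := by
    ext y; simp only [Set.mem_insert_iff, Set.mem_singleton_iff]; tauto
  have s4 : ({c, b, a} : Set Plane) = {a, b, c} := by
    ext y; simp only [Set.mem_insert_iff, Set.mem_singleton_iff]; tauto
  rcases hadj with ⟨q1, q2, q3⟩ | ⟨q1, q2, q3⟩
  · exact core a b c d e x hc1 hc2 hc4 hc5 hd1 q1 q2 q3 h1 h2 h4 h5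
  · apply core b a e d c x (by rw [s1]; exact hc5) (by rw [s2]; exact hc4)
      (by rw [s3]; exact hc2) (by rw [s4]; exact hc1) (by rw [s1]; exact hd2)
    · rw [Dd_swap a b e]; linarith
    · rw [Dd_swap a b d]; linarith
    · rw [Dd_swap a b c]; linarith
    · rw [s1]; exact h5
    · rw [s2]; exact h4
    · rw [s3]; exact h2
    · rw [s4]; exact h1

/-- A point of the family is not in the hull of any three of the others. -/
lemma hull_sub (f : Fin 5 → Plane) (hconv : ConvexPosition f) (i j k l : Fin 5)
    (hj : j ≠ i) (hk : k ≠ i) (hl : l ≠ i) :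
    f i ∉ convexHull ℝ ({f j, f k, f l} : Set Plane) := by
  intro hmem
  apply hconv i
  apply convexHull_mono ?_ hmem
  intro y hy
  rcases hy with rfl | rfl | rfl
  · exact ⟨j, hj, rfl⟩
  · exact ⟨k, hk, rfl⟩
  · exact ⟨l, hl, rfl⟩

theorem consecutive_adjacent_empty_intersection
    (p2 p3 p4 p5 p6 : Plane)
    (hcol : NoThreeCollinear ![p2, p3, p4, p5, p6])
    (hconv : ConvexPosition ![p2, p3, p4, p5, p6])
    (hadj : ∃ i : Fin 5, AdjacentVertices ![p2, p3, p4, p5, p6] i (i + 1)) :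
    interior (convexHull ℝ ({p2, p3, p4} : Set Plane)) ∩
      interior (convexHull ℝ ({p3, p4, p5} : Set Plane)) ∩
      interior (convexHull ℝ ({p4, p5, p6} : Set Plane)) ∩
      interior (convexHull ℝ ({p5, p6, p2} : Set Plane)) ∩
      interior (convexHull ℝ ({p6, p2, p3} : Set Plane)) = ∅ := by
  set f : Fin 5 → Plane := ![p2, p3, p4, p5, p6] with hf
  rw [Set.eq_empty_iff_forall_notMem]
  intro x hx
  obtain ⟨⟨⟨⟨hA, hB⟩, hC⟩, hD⟩, hE⟩ := hx
  obtain ⟨i, hi⟩ := hadj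
  fin_cases i
  · refine core2 p2 p3 p4 p5 p6 x (hcol 0 1 2 (by decide) (by decide) (by decide))
      (hcol 1 2 3 (by decide) (by decide) (by decide))
      (hcol 3 4 0 (by decide) (by decide) (by decide))
      (hcol 4 0 1 (by decide) (by decide) (by decide))
      (hull_sub f hconv 3 0 1 2 (by decide) (by decide) (by decide))
      (hull_sub f hconv 3 4 0 1 (by decide) (by decide) (by decide))
      ?_ hA hB hD hE
    rcases hi with h | h
    · exact Or.inl ⟨h 2 (by decide) (by decide), h 3 (by decide) (by decide),
        h 4 (by decide) (by decide)⟩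
    · exact Or.inr ⟨h 2 (by decide) (by decide), h 3 (by decide) (by decide),
        h 4 (by decide) (by decide)⟩
  · refine core2 p3 p4 p5 p6 p2 x (hcol 1 2 3 (by decide) (by decide) (by decide))
      (hcol 2 3 4 (by decide) (by decide) (by decide))
      (hcol 4 0 1 (by decide) (by decide) (by decide))
      (hcol 0 1 2 (by decide) (by decide) (by decide))
      (hull_sub f hconv 4 1 2 3 (by decide) (by decide) (by decide))
      (hull_sub f hconv 4 0 1 2 (by decide) (by decide) (by decide))
      ?_ hB hC hE hA
    rcases hi with h | h
    · exact Or.inl ⟨h 3 (by decide) (by decide), h 4 (by decide) (by decide),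
        h 0 (by decide) (by decide)⟩
    · exact Or.inr ⟨h 3 (by decide) (by decide), h 4 (by decide) (by decide),
        h 0 (by decide) (by decide)⟩
  · refine core2 p4 p5 p6 p2 p3 x (hcol 2 3 4 (by decide) (by decide) (by decide))
      (hcol 3 4 0 (by decide) (by decide) (by decide))
      (hcol 0 1 2 (by decide) (by decide) (by decide))
      (hcol 1 2 3 (by decide) (by decide) (by decide))
      (hull_sub f hconv 0 2 3 4 (by decide) (by decide) (by decide))
      (hull_sub f hconv 0 1 2 3 (by decide) (by decide) (by decide))
      ?_ hC hD hA hB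
    rcases hi with h | h
    · exact Or.inl ⟨h 4 (by decide) (by decide), h 0 (by decide) (by decide),
        h 1 (by decide) (by decide)⟩
    · exact Or.inr ⟨h 4 (by decide) (by decide), h 0 (by decide) (by decide),
        h 1 (by decide) (by decide)⟩
  · refine core2 p5 p6 p2 p3 p4 x (hcol 3 4 0 (by decide) (by decide) (by decide))
      (hcol 4 0 1 (by decide) (by decide) (by decide))
      (hcol 1 2 3 (by decide) (by decide) (by decide))
      (hcol 2 3 4 (by decide) (by decide) (by decide))
      (hull_sub f hconv 1 3 4 0 (by decide) (by decide) (by decide))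
      (hull_sub f hconv 1 2 3 4 (by decide) (by decide) (by decide))
      ?_ hD hE hB hC
    rcases hi with h | h
    · exact Or.inl ⟨h 0 (by decide) (by decide), h 1 (by decide) (by decide),
        h 2 (by decide) (by decide)⟩
    · exact Or.inr ⟨h 0 (by decide) (by decide), h 1 (by decide) (by decide),
        h 2 (by decide) (by decide)⟩
  · refine core2 p6 p2 p3 p4 p5 x (hcol 4 0 1 (by decide) (by decide) (by decide))
      (hcol 0 1 2 (by decide) (by decide) (by decide))
      (hcol 2 3 4 (by decide) (by decide) (by decide))
      (hcol 3 4 0 (by decide) (by decide) (by decide))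
      (hull_sub f hconv 2 4 0 1 (by decide) (by decide) (by decide))
      (hull_sub f hconv 2 3 4 0 (by decide) (by decide) (by decide))
      ?_ hE hA hC hD
    rcases hi with h | h
    · exact Or.inl ⟨h 1 (by decide) (by decide), h 2 (by decide) (by decide),
        h 3 (by decide) (by decide)⟩
    · exact Or.inr ⟨h 1 (by decide) (by decide), h 2 (by decide) (by decide),
        h 3 (by decide) (by decide)⟩
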